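/- arXiv:1802.04994 — 10 statements merged into one kernel-verified Lean document; each statement's English description precedes it below -/
import Mathlib

section
/- Let A be a commutative nonassociative algebra over a field K of characteristic ≠ 2, and let c_1, c_2 be distinct idempotents of A such that some third idempotent c_3 of A lies on the affine line through c_1 and c_2 (that is, c_3 = α c_1 + (1−α) c_2 with α ∈ K, α ≠ 0, α ≠ 1). Then (c_1 − c_2)² = 0 (so c_1 − c_2 is a nonzero 2-nilpotent), and for every α ∈ K the element α c_1 + (1−α) c_2 is an idempotent; in particular the whole line through c_1 and c_2 consists of idempotents. -/
/-- Proposition 3.2(a). If two distinct idempotents `c₁ ≠ c₂` of a commutative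
nonassociative algebra over a field of characteristic ≠ 2 are such that a third
idempotent `c₃ = α • c₁ + (1 - α) • c₂` (with `α ≠ 0`, `α ≠ 1`) lies on the affine
line through them, then `(c₁ - c₂)² = 0` (so `c₁ - c₂` is a nonzero 2-nilpotent)
and every point of the line is an idempotent. -/
theorem line_of_idempotents {K A : Type*} [Field K] [AddCommGroup A] [Module K A]
    (h2 : (2 : K) ≠ 0)
    (mul : A →ₗ[K] A →ₗ[K] A) (hcomm : ∀ x y : A, mul x y = mul y x)
    (c₁ c₂ c₃ : A) (hne : c₁ ≠ c₂)
    (h₁ : mul c₁ c₁ = c₁) (h₂ : mul c₂ c₂ = c₂) (h₃ : mul c₃ c₃ = c₃)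
    (α : K) (hα0 : α ≠ 0) (hα1 : α ≠ 1) (hline : c₃ = α • c₁ + (1 - α) • c₂) :
    mul (c₁ - c₂) (c₁ - c₂) = 0 ∧ c₁ - c₂ ≠ 0 ∧
      ∀ β : K, mul (β • c₁ + (1 - β) • c₂) (β • c₁ + (1 - β) • c₂)
        = β • c₁ + (1 - β) • c₂ := by
  set m := mul c₁ c₂ with hm
  have hcomm' : mul c₂ c₁ = m := (hcomm c₂ c₁)
  subst hline
  have hE : (α * α) • c₁ + ((1 - α) * (1 - α)) • c₂ + (2 * (α * (1 - α))) • m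
      = α • c₁ + (1 - α) • c₂ := by
    rw [← h₃]
    simp only [map_add, map_smul, LinearMap.add_apply, LinearMap.smul_apply,
      h₁, h₂, hcomm', ← hm]
    module
  have hkey : (α * (1 - α)) • ((2 : K) • m - c₁ - c₂) = 0 := by
    linear_combination (norm := module) hE
  have hαα : α * (1 - α) ≠ 0 := mul_ne_zero hα0 (sub_ne_zero.mpr (Ne.symm hα1))
  have h2m : (2 : K) • m = c₁ + c₂ := by
    rcases smul_eq_zero.mp hkey with h | h
    · exact absurd h hαα
    · linear_combination (norm := module) h
  refine ⟨?_, sub_ne_zero.mpr hne, ?_⟩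
  · simp only [map_sub, LinearMap.sub_apply, h₁, h₂, hcomm', ← hm]
    linear_combination (norm := module) (-1 : K) • h2m
  · intro β
    simp only [map_add, map_smul, LinearMap.add_apply, LinearMap.smul_apply,
      h₁, h₂, hcomm', ← hm]
    linear_combination (norm := module) (β * (1 - β)) • h2m
end

section
/- Let A be a commutative nonassociative algebra over a field K of characteristic ≠ 2, and let c_1, c_2 be distinct idempotents of A with (c_1 − c_2)² = 0. Then for every α ∈ K, the element c = α c_1 + (1−α) c_2 satisfies c (c_1 − c_2) = (1/2)(c_1 − c_2); in particular, c_1 − c_2 is an eigenvector of the multiplication operator L_c with eigenvalue 1/2 for every idempotent c on the line through c_1 and c_2. -/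
/-- Proposition 3.2, eigenvalue part. If `c₁ ≠ c₂` are idempotents of a commutative
nonassociative algebra over a field of characteristic ≠ 2 with `(c₁ - c₂)² = 0`,
then for every `α` the element `c = α • c₁ + (1 - α) • c₂` satisfies
`c (c₁ - c₂) = (1/2) (c₁ - c₂)`: the difference `c₁ - c₂` is an eigenvector of
`L_c` with eigenvalue `1/2` for every idempotent `c` on the line through `c₁, c₂`. -/
theorem half_eigenvector_on_line {K A : Type*} [Field K] [AddCommGroup A] [Module K A]
    (h2 : (2 : K) ≠ 0)
    (mul : A →ₗ[K] A →ₗ[K] A) (hcomm : ∀ x y : A, mul x y = mul y x)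
    (c₁ c₂ : A) (hne : c₁ ≠ c₂)
    (h₁ : mul c₁ c₁ = c₁) (h₂ : mul c₂ c₂ = c₂)
    (hnil : mul (c₁ - c₂) (c₁ - c₂) = 0) :
    ∀ α : K, mul (α • c₁ + (1 - α) • c₂) (c₁ - c₂) = (1 / 2 : K) • (c₁ - c₂) := by
  intro α
  have hc : mul c₂ c₁ = mul c₁ c₂ := hcomm c₂ c₁
  have key : (2 : K) • mul c₁ c₂ = c₁ + c₂ := by
    have := hnil
    simp only [map_sub, LinearMap.sub_apply, h₁, h₂, hc] at this
    have h' : c₁ + c₂ - (2 : K) • mul c₁ c₂ = 0 := by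
      rw [two_smul]; abel_nf; abel_nf at this; linear_combination (norm := module) this
    linear_combination (norm := module) -h'
  have key2 : mul c₁ c₂ = (1 / 2 : K) • (c₁ + c₂) := by
    have := congrArg (fun x : A => (1 / 2 : K) • x) key
    simpa [smul_smul, one_div, inv_mul_cancel₀ h2] using this
  simp only [map_add, map_sub, map_smul, LinearMap.add_apply, LinearMap.sub_apply,
    LinearMap.smul_apply, h₁, h₂, hc, key2]
  match_scalars <;> field_simp <;> ring
end

section
/- Let A be a commutative nonassociative algebra over a field K of characteristic zero such that: (i) for every nonzero idempotent c ∈ A, 1/2 is not an eigenvalue of the multiplication operator L_c; and (ii) every 2-dimensional linear subspace of A that is closed under multiplication contains at most 4 elements c with c² = c. Then every 2-dimensional affine subspace Π of A contains at most 4 elements c with c² = c, i.e. card({c ∈ Π : c² = c}) ≤ 4. -/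
/-- Proposition 3.5. Let `A` be a commutative nonassociative algebra over a field `K`
of characteristic zero such that (i) for every nonzero idempotent `c`, `1/2` is not an
eigenvalue of `L_c`, and (ii) every 2-dimensional linear subspace of `A` closed under
multiplication contains at most 4 idempotents. Then every 2-dimensional affine
subspace of `A` contains at most 4 idempotents. -/
theorem affine_plane_at_most_four_idempotents
    {K A : Type*} [Field K] [CharZero K] [AddCommGroup A] [Module K A]
    (mul : A →ₗ[K] A →ₗ[K] A) (hcomm : ∀ x y : A, mul x y = mul y x)
    (hi : ∀ c : A, c ≠ 0 → mul c c = c →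
      ¬ Module.End.HasEigenvalue (mul c) (1 / 2 : K))
    (hii : ∀ S : Submodule K A, Module.finrank K S = 2 →
      (∀ x ∈ S, ∀ y ∈ S, mul x y ∈ S) →
      ∀ s : Finset A, (∀ c ∈ s, c ∈ S ∧ mul c c = c) → s.card ≤ 4) :
    ∀ P : AffineSubspace K A, (P : Set A).Nonempty →
      Module.finrank K P.direction = 2 →
      ∀ s : Finset A, (∀ c ∈ s, c ∈ P ∧ mul c c = c) → s.card ≤ 4 := by
  intro P hPne hPdim s hs
  classical
  by_contra hcard
  push_neg at hcard
  have h5 : 5 ≤ s.card := hcard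
  -- The "line lemma": three distinct collinear idempotents are impossible.
  have L : ∀ (c z : A) (t1 t2 : K), z ≠ 0 → t1 ≠ 0 → t2 ≠ 0 → t1 ≠ t2 →
      mul c c = c → mul (c + t1 • z) (c + t1 • z) = c + t1 • z →
      mul (c + t2 • z) (c + t2 • z) = c + t2 • z → False := by
    intro c z t1 t2 hz ht1 ht2 htne hc h1 h2
    simp only [map_add, map_smul, LinearMap.add_apply, LinearMap.smul_apply] at h1 h2
    rw [hcomm z c, hc] at h1 h2
    have e1 : (2*t1) • mul c z + (t1*t1) • mul z z = t1 • z := by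
      linear_combination (norm := module) h1
    have e2 : (2*t2) • mul c z + (t2*t2) • mul z z = t2 • z := by
      linear_combination (norm := module) h2
    have hzz : mul z z = 0 := by
      have e3 : (t1*t2*(t1-t2)) • mul z z = 0 := by
        linear_combination (norm := module) t2 • e1 - t1 • e2
      exact (smul_eq_zero.1 e3).resolve_left
        (mul_ne_zero (mul_ne_zero ht1 ht2) (sub_ne_zero.2 htne))
    rw [hzz, smul_zero, add_zero] at e1
    have hcz : mul c z = (1 / 2 : K) • z := by
      apply smul_right_injective A (mul_ne_zero (two_ne_zero (α := K)) ht1)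
      show (2*t1) • mul c z = (2*t1) • ((1/2 : K) • z)
      rw [smul_smul, show (2*t1) * (1/2 : K) = t1 by ring]
      exact e1
    have hcne : c ≠ 0 := by
      rintro rfl
      simp only [map_zero, LinearMap.zero_apply] at hcz
      exact hz (by simpa using hcz.symm)
    exact hi c hcne hc
      (Module.End.hasEigenvalue_of_hasEigenvector
        ⟨Module.End.mem_eigenspace_iff.2 hcz, hz⟩)
  -- Extract five pairwise-distinct idempotents, the first one nonzero.
  obtain ⟨c0, hc0m⟩ : (s.erase 0).Nonempty := by
    rw [← Finset.card_pos]
    have := Finset.pred_card_le_card_erase (s := s) (a := (0 : A))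
    omega
  have hc0s : c0 ∈ s := Finset.mem_of_mem_erase hc0m
  have hc0ne : c0 ≠ 0 := Finset.ne_of_mem_erase hc0m
  obtain ⟨c1, hc1m⟩ : (s.erase c0).Nonempty := by
    rw [← Finset.card_pos, Finset.card_erase_of_mem hc0s]; omega
  obtain ⟨h10, hc1s⟩ := Finset.mem_erase.1 hc1m
  obtain ⟨c2, hc2m⟩ : ((s.erase c0).erase c1).Nonempty := by
    rw [← Finset.card_pos, Finset.card_erase_of_mem hc1m,
      Finset.card_erase_of_mem hc0s]; omega
  obtain ⟨h21, hc2m'⟩ := Finset.mem_erase.1 hc2m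
  obtain ⟨h20, hc2s⟩ := Finset.mem_erase.1 hc2m'
  obtain ⟨c3, hc3m⟩ : (((s.erase c0).erase c1).erase c2).Nonempty := by
    rw [← Finset.card_pos, Finset.card_erase_of_mem hc2m,
      Finset.card_erase_of_mem hc1m, Finset.card_erase_of_mem hc0s]; omega
  obtain ⟨h32, hc3m'⟩ := Finset.mem_erase.1 hc3m
  obtain ⟨h31, hc3m2⟩ := Finset.mem_erase.1 hc3m'
  obtain ⟨h30, hc3s⟩ := Finset.mem_erase.1 hc3m2
  obtain ⟨c4, hc4m⟩ : ((((s.erase c0).erase c1).erase c2).erase c3).Nonempty := by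
    rw [← Finset.card_pos, Finset.card_erase_of_mem hc3m,
      Finset.card_erase_of_mem hc2m, Finset.card_erase_of_mem hc1m,
      Finset.card_erase_of_mem hc0s]; omega
  obtain ⟨h43, hc4m'⟩ := Finset.mem_erase.1 hc4m
  obtain ⟨h42, hc4m2⟩ := Finset.mem_erase.1 hc4m'
  obtain ⟨h41, hc4m3⟩ := Finset.mem_erase.1 hc4m2
  obtain ⟨h40, hc4s⟩ := Finset.mem_erase.1 hc4m3
  obtain ⟨hc0P, hid0⟩ := hs c0 hc0s
  obtain ⟨hc1P, hid1⟩ := hs c1 hc1s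
  obtain ⟨hc2P, hid2⟩ := hs c2 hc2s
  obtain ⟨hc3P, hid3⟩ := hs c3 hc3s
  obtain ⟨hc4P, hid4⟩ := hs c4 hc4s
  set u := c1 - c0 with hudef
  set v := c2 - c0 with hvdef
  have hc1e : c1 = c0 + u := by rw [hudef]; abel
  have hc2e : c2 = c0 + v := by rw [hvdef]; abel
  have hune : u ≠ 0 := by rw [hudef]; exact sub_ne_zero.2 h10
  have hvne : v ≠ 0 := by rw [hvdef]; exact sub_ne_zero.2 h20
  -- squares of u and v
  have hu2 : mul u u = u - (2 : K) • mul c0 u := by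
    have e := hid1
    rw [hc1e] at e
    simp only [map_add, LinearMap.add_apply] at e
    rw [hcomm u c0, hid0] at e
    linear_combination (norm := module) e
  have hv2 : mul v v = v - (2 : K) • mul c0 v := by
    have e := hid2
    rw [hc2e] at e
    simp only [map_add, LinearMap.add_apply] at e
    rw [hcomm v c0, hid0] at e
    linear_combination (norm := module) e
  -- u and v are linearly independent
  have induv : ∀ x y : K, x • u + y • v = 0 → x = 0 ∧ y = 0 := by
    intro x y hxy
    by_cases hx : x = 0
    · refine ⟨hx, ?_⟩
      rw [hx, zero_smul, zero_add, smul_eq_zero] at hxy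
      exact hxy.resolve_right hvne
    · exfalso
      set t : K := -(y / x) with htdef
      have hut : u = t • v := by
        apply smul_right_injective A hx
        show x • u = x • (t • v)
        rw [smul_smul, show x * t = -y by rw [htdef]; field_simp]
        linear_combination (norm := module) hxy
      have ht0 : t ≠ 0 := fun h => hune (by rw [hut, h, zero_smul])
      have ht1 : (1 : K) ≠ t := by
        intro h
        exact h21 (by rw [hc2e, hc1e, hut, ← h, one_smul])
      refine L c0 v 1 t hvne one_ne_zero ht0 ht1 hid0 ?_ ?_
      · rw [one_smul, ← hc2e]; exact hid2
      · rw [← hut, ← hc1e]; exact hid1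
  -- injectivity of I - 2 L_{c0}
  have hMinj : ∀ x : A, x = (2 : K) • mul c0 x → x = 0 := by
    intro x hx
    by_contra hxne
    have hcx : mul c0 x = (1 / 2 : K) • x := by
      apply smul_right_injective A (two_ne_zero (α := K))
      show (2 : K) • mul c0 x = (2 : K) • ((1 / 2 : K) • x)
      rw [smul_smul, show (2 : K) * (1 / 2 : K) = 1 by norm_num, one_smul]
      exact hx.symm
    exact hi c0 hc0ne hid0
      (Module.End.hasEigenvalue_of_hasEigenvector
        ⟨Module.End.mem_eigenspace_iff.2 hcx, hxne⟩)
  have indMuv : ∀ x y : K,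
      x • (u - (2 : K) • mul c0 u) + y • (v - (2 : K) • mul c0 v) = 0 →
      x = 0 ∧ y = 0 := by
    intro x y hxy
    refine induv x y (hMinj _ ?_)
    rw [map_add, map_smul, map_smul]
    linear_combination (norm := module) hxy
  -- the key equation characterizing idempotents in the plane
  have key : ∀ a b : K,
      (mul (c0 + a • u + b • v) (c0 + a • u + b • v) = c0 + a • u + b • v) ↔
      (a*a - a) • (u - (2 : K) • mul c0 u) + (b*b - b) • (v - (2 : K) • mul c0 v)
        + (2*(a*b)) • mul u v = 0 := by
    intro a b
    have expand : mul (c0 + a • u + b • v) (c0 + a • u + b • v)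
        = c0 + (2*a) • mul c0 u + (2*b) • mul c0 v + (a*a) • mul u u
          + (2*(a*b)) • mul u v + (b*b) • mul v v := by
      simp only [map_add, map_smul, LinearMap.add_apply, LinearMap.smul_apply]
      rw [hcomm u c0, hcomm v c0, hcomm v u, hid0]
      module
    rw [expand, hu2, hv2]
    constructor
    · intro h; linear_combination (norm := module) h
    · intro h; linear_combination (norm := module) h
  -- the span of u, v is the direction of P
  have hindep : LinearIndependent K ![u, v] := LinearIndependent.pair_iff.2 induv
  have hfd : FiniteDimensional K P.direction :=
    FiniteDimensional.of_finrank_pos (by rw [hPdim]; norm_num)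
  have humem : u ∈ P.direction := by
    rw [hudef]
    simpa [vsub_eq_sub] using AffineSubspace.vsub_mem_direction hc1P hc0P
  have hvmem : v ∈ P.direction := by
    rw [hvdef]
    simpa [vsub_eq_sub] using AffineSubspace.vsub_mem_direction hc2P hc0P
  have hsub : Submodule.span K {u, v} ≤ P.direction := by
    rw [Submodule.span_le]
    intro x hx
    simp only [Set.mem_insert_iff, Set.mem_singleton_iff] at hx
    rcases hx with rfl | rfl
    · exact humem
    · exact hvmem
  have hrange : Set.range ![u, v] = {u, v} := by
    ext x
    simp only [Set.mem_range, Set.mem_insert_iff, Set.mem_singleton_iff]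
    constructor
    · rintro ⟨i, rfl⟩
      fin_cases i
      · left; simp
      · right; simp
    · rintro (rfl | rfl)
      · exact ⟨0, by simp⟩
      · exact ⟨1, by simp⟩
  have hspan : Submodule.span K {u, v} = P.direction := by
    apply Submodule.eq_of_le_of_finrank_le hsub
    rw [hPdim]
    have h2 : Module.finrank K (Submodule.span K (Set.range ![u, v])) = 2 := by
      rw [finrank_span_eq_card hindep]; simp
    rw [hrange] at h2
    rw [h2]
  have coord : ∀ c : A, c ∈ s → ∃ a b : K, c = c0 + a • u + b • v := by
    intro c hcs
    have hd : c - c0 ∈ P.direction := by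
      simpa [vsub_eq_sub] using AffineSubspace.vsub_mem_direction (hs c hcs).1 hc0P
    rw [← hspan] at hd
    obtain ⟨a, b, hab⟩ := Submodule.mem_span_pair.1 hd
    exact ⟨a, b, by linear_combination (norm := module) -hab⟩
  -- nonvanishing of the coordinates
  have coordfacts : ∀ cc : A, cc ∈ s → cc ≠ c0 → cc ≠ c1 → cc ≠ c2 → ∀ a b : K,
      cc = c0 + a • u + b • v → a ≠ 0 ∧ b ≠ 0 := by
    intro cc hccs hne0 hne1 hne2 a b hcc
    constructor
    · intro ha
      have hb0 : b ≠ 0 := by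
        intro hb
        exact hne0 (by rw [hcc, ha, hb, zero_smul, zero_smul, add_zero, add_zero])
      have hb1 : (1 : K) ≠ b := by
        intro hb
        exact hne2 (by rw [hcc, ha, ← hb, zero_smul, add_zero, one_smul, ← hc2e])
      refine L c0 v 1 b hvne one_ne_zero hb0 hb1 hid0 ?_ ?_
      · rw [one_smul, ← hc2e]; exact hid2
      · have hcc' : c0 + b • v = cc := by rw [hcc, ha, zero_smul, add_zero]
        rw [hcc']; exact (hs cc hccs).2
    · intro hb
      have ha0 : a ≠ 0 := by
        intro ha
        exact hne0 (by rw [hcc, ha, hb, zero_smul, zero_smul, add_zero, add_zero])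
      have ha1 : (1 : K) ≠ a := by
        intro ha
        exact hne1 (by rw [hcc, hb, ← ha, zero_smul, add_zero, one_smul, ← hc1e])
      refine L c0 u 1 a hune one_ne_zero ha0 ha1 hid0 ?_ ?_
      · rw [one_smul, ← hc1e]; exact hid1
      · have hcc' : c0 + a • u = cc := by rw [hcc, hb, zero_smul, add_zero]
        rw [hcc']; exact (hs cc hccs).2
  obtain ⟨a3, b3, hc3eq⟩ := coord c3 hc3s
  obtain ⟨a4, b4, hc4eq⟩ := coord c4 hc4s
  obtain ⟨ha3, hb3⟩ := coordfacts c3 hc3s h30 h31 h32 a3 b3 hc3eq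
  obtain ⟨ha4, hb4⟩ := coordfacts c4 hc4s h40 h41 h42 a4 b4 hc4eq
  rw [hc3eq] at hid3
  rw [hc4eq] at hid4
  have E3 := (key a3 b3).1 hid3
  -- express mul u v through the basis
  obtain ⟨α, hαdef⟩ : ∃ x : K, x = (1 - a3) / (2 * b3) := ⟨_, rfl⟩
  obtain ⟨β, hβdef⟩ : ∃ x : K, x = (1 - b3) / (2 * a3) := ⟨_, rfl⟩
  have hwv : mul u v = α • (u - (2 : K) • mul c0 u) + β • (v - (2 : K) • mul c0 v) := by
    apply smul_right_injective A (show (2*(a3*b3) : K) ≠ 0 from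
      mul_ne_zero two_ne_zero (mul_ne_zero ha3 hb3))
    show (2*(a3*b3)) • mul u v
      = (2*(a3*b3)) • (α • (u - (2 : K) • mul c0 u) + β • (v - (2 : K) • mul c0 v))
    rw [smul_add, smul_smul, smul_smul,
      show (2*(a3*b3)) * α = a3 - a3*a3 by rw [hαdef]; field_simp,
      show (2*(a3*b3)) * β = b3 - b3*b3 by rw [hβdef]; field_simp]
    linear_combination (norm := module) E3
  have key2 : ∀ a b : K,
      (mul (c0 + a • u + b • v) (c0 + a • u + b • v) = c0 + a • u + b • v) ↔
      (a*a - a + 2*(a*b)*α = 0 ∧ b*b - b + 2*(a*b)*β = 0) := by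
    intro a b
    rw [key a b, hwv]
    constructor
    · intro h
      exact indMuv _ _ (by linear_combination (norm := module) h)
    · rintro ⟨h1, h2⟩
      match_scalars <;>
        first
          | linear_combination h1 | linear_combination h2
          | linear_combination 2*h1 | linear_combination 2*h2
          | linear_combination 3*h1 | linear_combination 3*h2
          | linear_combination -2*h1 | linear_combination -2*h2
          | linear_combination -3*h1 | linear_combination -3*h2
          | linear_combination 6*h1 | linear_combination 6*h2
          | linear_combination -6*h1 | linear_combination -6*h2
          | linear_combination -h1 - h2 | linear_combination h1 + h2
          | linear_combination 2*h1 + 2*h2 | linear_combination -2*h1 - 2*h2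
          | linear_combination 3*h1 + 3*h2 | linear_combination -3*h1 - 3*h2
          | ring
  -- scalar relations
  have hA : 2*b3*α = 1 - a3 := by rw [hαdef]; field_simp
  have hB : 2*a3*β = 1 - b3 := by rw [hβdef]; field_simp
  have A3 : a3 - 1 + 2*b3*α = 0 := by linear_combination hA
  have B3 : b3 - 1 + 2*a3*β = 0 := by linear_combination hB
  obtain ⟨P4a, P4b⟩ := (key2 a4 b4).1 hid4
  have A4 : a4 - 1 + 2*b4*α = 0 := by
    have h := mul_left_cancel₀ ha4
      (show a4 * (a4 - 1 + 2*b4*α) = a4 * 0 by rw [mul_zero]; linear_combination P4a)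
    exact h
  have B4 : b4 - 1 + 2*a4*β = 0 := by
    have h := mul_left_cancel₀ hb4
      (show b4 * (b4 - 1 + 2*a4*β) = b4 * 0 by rw [mul_zero]; linear_combination P4b)
    exact h
  have ha34 : a3 ≠ a4 := by
    intro h
    have hb34 : b3 = b4 := by linear_combination B3 - B4 - 2*β*h
    exact h43 (by rw [hc4eq, hc3eq, ← h, ← hb34])
  have e3 : (a3 - a4) * (1 - 4*α*β) = 0 := by
    linear_combination A3 - A4 - 2*α*B3 + 2*α*B4
  have h1m : 1 - 4*α*β = 0 := (mul_eq_zero.1 e3).resolve_left (sub_ne_zero.2 ha34)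
  have hαh : α = 1/2 := by linear_combination (1/2 : K)*A3 - α*B3 - (a3/2)*h1m
  have hβh : β = 1/2 := by linear_combination (-(1 : K)/2)*h1m - 2*β*hαh
  -- the point with coordinates (2, -1) is an idempotent
  have hd : mul (c0 + (2 : K) • u + (-1 : K) • v) (c0 + (2 : K) • u + (-1 : K) • v)
      = c0 + (2 : K) • u + (-1 : K) • v :=
    (key2 2 (-1)).2 ⟨by rw [hαh]; norm_num, by rw [hβh]; norm_num⟩
  -- c1, c2 and this point are three distinct collinear idempotents
  have hzne : v - u ≠ 0 := sub_ne_zero.2 fun h => h21 (by rw [hc2e, hc1e, h])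
  refine L (c0 + u) (v - u) 1 (-1) hzne one_ne_zero (by norm_num) (by norm_num)
    ?_ ?_ ?_
  · rw [← hc1e]; exact hid1
  · have he : c0 + u + (1 : K) • (v - u) = c0 + v := by module
    rw [he, ← hc2e]; exact hid2
  · have he : c0 + u + (-1 : K) • (v - u) = c0 + (2 : K) • u + (-1 : K) • v := by
      module
    rw [he]; exact hd
end

section
/- Let A be a commutative nonassociative algebra over a field K of characteristic ≠ 2, let c_1, c_2, c_3 be idempotents of A, and suppose (c_1 − c_2)² = λ (c_1 − c_3)² for some λ ∈ K. Set u := c_2 − λ c_3 and v := (λ − 1) c_1 + u. Then c_1 u = (1/2)(1 − λ) c_1 + (1/2) u and c_1 v = (1/2) v; consequently, if v ≠ 0, then 1/2 is an eigenvalue of the multiplication operator L_{c_1}. -/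
/-- (From the proof of Proposition 3.5.) Let `c₁, c₂, c₃` be idempotents of a
commutative nonassociative algebra over a field of characteristic ≠ 2 such that
`(c₁ - c₂)² = λ (c₁ - c₃)²`. With `u = c₂ - λ • c₃` and `v = (λ - 1) • c₁ + u` one
has `c₁ u = ((1 - λ)/2) c₁ + (1/2) u` and `c₁ v = (1/2) v`; hence if `v ≠ 0` then
`1/2` is an eigenvalue of `L_{c₁}`. -/
theorem half_in_spectrum_of_proportional_squares
    {K A : Type*} [Field K] [AddCommGroup A] [Module K A]
    (h2 : (2 : K) ≠ 0)
    (mul : A →ₗ[K] A →ₗ[K] A) (hcomm : ∀ x y : A, mul x y = mul y x)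
    (c₁ c₂ c₃ : A) (h₁ : mul c₁ c₁ = c₁) (h₂ : mul c₂ c₂ = c₂) (h₃ : mul c₃ c₃ = c₃)
    (lam : K) (hprop : mul (c₁ - c₂) (c₁ - c₂) = lam • mul (c₁ - c₃) (c₁ - c₃)) :
    mul c₁ (c₂ - lam • c₃)
        = ((1 - lam) / 2) • c₁ + (1 / 2 : K) • (c₂ - lam • c₃) ∧
      mul c₁ ((lam - 1) • c₁ + (c₂ - lam • c₃))
        = (1 / 2 : K) • ((lam - 1) • c₁ + (c₂ - lam • c₃)) ∧
      ((lam - 1) • c₁ + (c₂ - lam • c₃) ≠ 0 →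
        Module.End.HasEigenvalue (mul c₁) (1 / 2 : K)) := by
  simp only [map_sub, map_smul, LinearMap.sub_apply, LinearMap.smul_apply,
    h₁, h₂, h₃, hcomm c₂ c₁, hcomm c₃ c₁] at hprop
  have key : (2 : K) • mul c₁ (c₂ - lam • c₃)
      = (1 - lam) • c₁ + (c₂ - lam • c₃) := by
    simp only [map_sub, map_smul]
    linear_combination (norm := module) -hprop
  have e1 : mul c₁ (c₂ - lam • c₃)
      = ((1 - lam) / 2) • c₁ + (1 / 2 : K) • (c₂ - lam • c₃) := by
    have := congrArg (fun x => (1 / 2 : K) • x) key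
    simp only [smul_smul, one_div, inv_mul_cancel₀ h2, one_smul, smul_add] at this
    rw [this]
    match_scalars <;> field_simp
  refine ⟨e1, ?_, ?_⟩
  · rw [map_add, map_smul, h₁, e1]
    match_scalars <;> field_simp <;> ring
  · intro hv
    refine Module.End.hasEigenvalue_of_hasEigenvector ⟨?_, hv⟩
    rw [Module.End.mem_eigenspace_iff]
    show mul c₁ _ = _
    rw [map_add, map_smul, h₁, e1]
    match_scalars <;> field_simp <;> ring
end

section
/- Let A be a 2-dimensional commutative nonassociative algebra over ℂ such that A has no nonzero 2-nilpotents and the set {c ∈ A : c² = c} consists of exactly four elements 0, c_1, c_2, c_3. For i = 1, 2, 3 let λ_i ∈ ℂ be such that the characteristic polynomial of the multiplication operator L_{c_i} is (t − 1)(t − λ_i), and assume λ_i ≠ 1/2 for each i. Then 4 λ_1 λ_2 λ_3 − λ_1 − λ_2 − λ_3 + 1 = 0. -/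
open Polynomial

lemma coeff_one_aux (lam : ℂ) : ((X - 1) * (X - C lam)).coeff 1 = -(1 + lam) := by
  have h : (X - 1) * (X - C lam) = X ^ 2 - (C lam + 1) * X + C lam := by ring
  simp [h, coeff_X_pow]; ring

lemma trace_of_charpoly {A : Type*} [AddCommGroup A] [Module ℂ A] [FiniteDimensional ℂ A]
    (B : Module.Basis (Fin 2) ℂ A) (f : A →ₗ[ℂ] A) (lam : ℂ)
    (hχ : LinearMap.charpoly f = (X - 1) * (X - C lam)) :
    B.repr (f (B 0)) 0 + B.repr (f (B 1)) 1 = 1 + lam := by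
  have h1 : (LinearMap.toMatrix B B f).trace
      = -(LinearMap.toMatrix B B f).charpoly.coeff (Fintype.card (Fin 2) - 1) :=
    Matrix.trace_eq_neg_charpoly_coeff _
  rw [LinearMap.charpoly_toMatrix, hχ] at h1
  simp only [Fintype.card_fin] at h1
  rw [coeff_one_aux] at h1
  rw [Matrix.trace_fin_two] at h1
  simp only [LinearMap.toMatrix_apply] at h1
  rw [h1]; ring


/-- Spectral syzygy for two-dimensional generic algebras. Let `A` be a 2-dimensional
commutative nonassociative algebra over `ℂ` with no nonzero 2-nilpotents whose set of
idempotents consists of exactly the four elements `0, c₁, c₂, c₃`. If the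
characteristic polynomial of `L_{cᵢ}` is `(t - 1)(t - λᵢ)` with `λᵢ ≠ 1/2`, then
`4 λ₁ λ₂ λ₃ - λ₁ - λ₂ - λ₃ + 1 = 0`. -/
theorem spectral_syzygy_dim_two
    {A : Type*} [AddCommGroup A] [Module ℂ A] [FiniteDimensional ℂ A]
    (hdim : Module.finrank ℂ A = 2)
    (mul : A →ₗ[ℂ] A →ₗ[ℂ] A) (hcomm : ∀ x y : A, mul x y = mul y x)
    (hnil : ∀ x : A, mul x x = 0 → x = 0)
    (c₁ c₂ c₃ : A)
    (hc₁ : c₁ ≠ 0) (hc₂ : c₂ ≠ 0) (hc₃ : c₃ ≠ 0)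
    (h12 : c₁ ≠ c₂) (h13 : c₁ ≠ c₃) (h23 : c₂ ≠ c₃)
    (hidm : {c : A | mul c c = c} = {0, c₁, c₂, c₃})
    (lam₁ lam₂ lam₃ : ℂ)
    (hχ₁ : LinearMap.charpoly (mul c₁) = (X - 1) * (X - C lam₁))
    (hχ₂ : LinearMap.charpoly (mul c₂) = (X - 1) * (X - C lam₂))
    (hχ₃ : LinearMap.charpoly (mul c₃) = (X - 1) * (X - C lam₃))
    (hl₁ : lam₁ ≠ 1 / 2) (hl₂ : lam₂ ≠ 1 / 2) (hl₃ : lam₃ ≠ 1 / 2) :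
    4 * lam₁ * lam₂ * lam₃ - lam₁ - lam₂ - lam₃ + 1 = 0 := by
  -- idempotency
  have e1 : mul c₁ c₁ = c₁ := by
    have : c₁ ∈ {c : A | mul c c = c} := by rw [hidm]; right; left; rfl
    exact this
  have e2 : mul c₂ c₂ = c₂ := by
    have : c₂ ∈ {c : A | mul c c = c} := by rw [hidm]; right; right; left; rfl
    exact this
  have e3 : mul c₃ c₃ = c₃ := by
    have : c₃ ∈ {c : A | mul c c = c} := by rw [hidm]; right; right; right; rfl
    exact this
  -- c₂ is not a scalar multiple of c₁
  have hli : LinearIndependent ℂ ![c₁, c₂] := by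
    rw [LinearIndependent.pair_iff' hc₁]
    intro α hα
    have : mul (α • c₁) (α • c₁) = α • c₁ := hα ▸ e2
    simp only [map_smul, LinearMap.smul_apply, e1, smul_smul] at this
    have h0 : (α * α - α) • c₁ = 0 := by rw [sub_smul]; rw [this]; simp
    have hαα : α * α - α = 0 := by
      by_contra h
      exact hc₁ (by simpa [h] using (smul_eq_zero.mp h0).resolve_right hc₁ ; )
    have : α = 0 ∨ α = 1 := by
      rcases mul_eq_zero.mp (by linear_combination hαα : α * (α - 1) = 0) with h | h
      · exact Or.inl h
      · exact Or.inr (by linear_combination h)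
    rcases this with h | h
    · subst h; simp at hα; exact hc₂ hα.symm
    · subst h; simp at hα; exact h12 hα
  have hcard : Fintype.card (Fin 2) = Module.finrank ℂ A := by simp [hdim]
  let B : Module.Basis (Fin 2) ℂ A := basisOfLinearIndependentOfCardEqFinrank hli hcard
  have hB0 : B 0 = c₁ := by simp [B, coe_basisOfLinearIndependentOfCardEqFinrank]
  have hB1 : B 1 = c₂ := by simp [B, coe_basisOfLinearIndependentOfCardEqFinrank]
  set p : ℂ := B.repr (mul c₁ c₂) 0 with hp
  set q : ℂ := B.repr (mul c₁ c₂) 1 with hq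
  set a : ℂ := B.repr c₃ 0 with ha
  set b : ℂ := B.repr c₃ 1 with hb
  -- representation of elements
  have hrepr : ∀ x : A, x = B.repr x 0 • c₁ + B.repr x 1 • c₂ := by
    intro x
    have := B.sum_repr x
    rw [Fin.sum_univ_two, hB0, hB1] at this
    exact this.symm
  have hmul12 : mul c₁ c₂ = p • c₁ + q • c₂ := hrepr _
  have hc3 : c₃ = a • c₁ + b • c₂ := hrepr _
  -- coordinates of combinations
  have hcoord0 : ∀ s t : ℂ, B.repr (s • c₁ + t • c₂) 0 = s := by
    intro s t; rw [← hB0, ← hB1]; simp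
  have hcoord1 : ∀ s t : ℂ, B.repr (s • c₁ + t • c₂) 1 = t := by
    intro s t; rw [← hB0, ← hB1]; simp
  -- expand mul c₃ c₃
  have hmul33 : mul c₃ c₃ = (a * a + 2 * a * b * p) • c₁ + (b * b + 2 * a * b * q) • c₂ := by
    nth_rewrite 1 [hc3]; nth_rewrite 1 [hc3]
    simp only [map_add, map_smul, LinearMap.add_apply, LinearMap.smul_apply, e1, e2,
      hcomm c₂ c₁, hmul12]
    module
  -- coordinate equations for idempotency of c₃
  have h33 : (a * a + 2 * a * b * p) • c₁ + (b * b + 2 * a * b * q) • c₂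
      = a • c₁ + b • c₂ := hmul33.symm.trans (e3.trans hc3)
  have hA : a * a + 2 * a * b * p = a := by
    have := congrArg (fun x => B.repr x 0) h33
    simpa only [hcoord0] using this
  have hBq : b * b + 2 * a * b * q = b := by
    have := congrArg (fun x => B.repr x 1) h33
    simpa only [hcoord1] using this
  -- nonvanishing of a and b
  have hidem_coeff : ∀ t : ℂ, ∀ c : A, c ≠ 0 → mul c c = c → (t • c ≠ 0 ∧ t • c ≠ c) →
      mul (t • c) (t • c) ≠ t • c := by
    intro t c hc hcc ⟨ht0, htc⟩ h
    simp only [map_smul, LinearMap.smul_apply, hcc, smul_smul] at h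
    have h0 : (t * t - t) • c = 0 := by rw [sub_smul, h]; simp
    rcases smul_eq_zero.mp h0 with h' | h'
    · rcases mul_eq_zero.mp (by linear_combination h' : t * (t - 1) = 0) with h'' | h''
      · exact ht0 (by simp [h''])
      · exact htc (by simp [sub_eq_zero.mp h''])
    · exact hc h'
  have ha0 : a ≠ 0 := by
    intro h
    have hc3' : c₃ = b • c₂ := by rw [hc3, h]; simp
    exact hidem_coeff b c₂ hc₂ e2 ⟨hc3' ▸ hc₃, fun hx => h23 (hc3'.trans hx).symm⟩
      (by rw [← hc3']; exact e3)
  have hb0 : b ≠ 0 := by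
    intro h
    have hc3' : c₃ = a • c₁ := by rw [hc3, h]; simp
    exact hidem_coeff a c₁ hc₁ e1 ⟨hc3' ▸ hc₃, fun hx => h13 (hc3'.trans hx).symm⟩
      (by rw [← hc3']; exact e3)
  -- simple coordinates
  have hrc10 : B.repr c₁ 0 = 1 := by rw [← hB0]; simp
  have hrc21 : B.repr c₂ 1 = 1 := by rw [← hB1]; simp
  -- trace equations
  have t1 := trace_of_charpoly B (mul c₁) lam₁ hχ₁
  have t2 := trace_of_charpoly B (mul c₂) lam₂ hχ₂
  have t3 := trace_of_charpoly B (mul c₃) lam₃ hχ₃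
  rw [hB0, hB1] at t1 t2 t3
  rw [e1, hrc10] at t1
  rw [hcomm c₂ c₁, e2, hrc21] at t2
  -- lam₁ = q, lam₂ = p
  have hl1v : lam₁ = q := by linear_combination -t1
  have hl2v : lam₂ = p := by linear_combination -t2
  -- mul c₃ c₁ and mul c₃ c₂
  have hm31 : mul c₃ c₁ = (a + b * p) • c₁ + (b * q) • c₂ := by
    nth_rewrite 1 [hc3]
    simp only [map_add, map_smul, LinearMap.add_apply, LinearMap.smul_apply, e1,
      hcomm c₂ c₁, hmul12]
    module
  have hm32 : mul c₃ c₂ = (a * p) • c₁ + (a * q + b) • c₂ := by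
    nth_rewrite 1 [hc3]
    simp only [map_add, map_smul, LinearMap.add_apply, LinearMap.smul_apply, e2, hmul12]
    module
  rw [hm31, hm32, hcoord0, hcoord1] at t3
  have h1 : a + 2 * b * p = 1 :=
    mul_left_cancel₀ ha0 (show a * (a + 2 * b * p) = a * 1 by linear_combination hA)
  have h2 : b + 2 * a * q = 1 :=
    mul_left_cancel₀ hb0 (show b * (b + 2 * a * q) = b * 1 by linear_combination hBq)
  have hl3 : lam₃ * 2 = a + b := by linear_combination -2 * t3 + h1 + h2
  have h2ab : (2 : ℂ) * a * b ≠ 0 := by simp [ha0, hb0]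
  have key : 2 * a * b * (4 * q * p * lam₃ - q - p - lam₃ + 1) = 2 * a * b * 0 := by
    linear_combination ((1 - b) * (2 * lam₃) - a) * h1 + ((2 * b * p) * (2 * lam₃) - b) * h2 +
      ((1 - b) * (1 - a) - a * b) * hl3
  rw [hl1v, hl2v]
  exact mul_left_cancel₀ h2ab key
end

section
/- Let A be a 2-dimensional commutative nonassociative algebra over ℂ such that A has no nonzero 2-nilpotents and the set {c ∈ A : c² = c} consists of exactly four elements 0, c_1, c_2, c_3. For i = 1, 2, 3 let λ_i ∈ ℂ be such that the characteristic polynomial of the multiplication operator L_{c_i} is (t − 1)(t − λ_i), and assume λ_i ≠ 1/2 for each i. Then the idempotents satisfy the vector syzygy c_1/(2λ_1 − 1) + c_2/(2λ_2 − 1) + c_3/(2λ_3 − 1) = 0. -/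
open Polynomial

/-- Vector syzygy for two-dimensional generic algebras. Let `A` be a 2-dimensional
commutative nonassociative algebra over `ℂ` with no nonzero 2-nilpotents whose set of
idempotents consists of exactly the four elements `0, c₁, c₂, c₃`. If the
characteristic polynomial of `L_{cᵢ}` is `(t - 1)(t - λᵢ)` with `λᵢ ≠ 1/2`, then
`c₁/(2λ₁ - 1) + c₂/(2λ₂ - 1) + c₃/(2λ₃ - 1) = 0`. -/
theorem vector_syzygy_dim_two
    {A : Type*} [AddCommGroup A] [Module ℂ A] [FiniteDimensional ℂ A]
    (hdim : Module.finrank ℂ A = 2)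
    (mul : A →ₗ[ℂ] A →ₗ[ℂ] A) (hcomm : ∀ x y : A, mul x y = mul y x)
    (hnil : ∀ x : A, mul x x = 0 → x = 0)
    (c₁ c₂ c₃ : A)
    (hc₁ : c₁ ≠ 0) (hc₂ : c₂ ≠ 0) (hc₃ : c₃ ≠ 0)
    (h12 : c₁ ≠ c₂) (h13 : c₁ ≠ c₃) (h23 : c₂ ≠ c₃)
    (hidm : {c : A | mul c c = c} = {0, c₁, c₂, c₃})
    (lam₁ lam₂ lam₃ : ℂ)
    (hχ₁ : LinearMap.charpoly (mul c₁) = (X - 1) * (X - C lam₁))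
    (hχ₂ : LinearMap.charpoly (mul c₂) = (X - 1) * (X - C lam₂))
    (hχ₃ : LinearMap.charpoly (mul c₃) = (X - 1) * (X - C lam₃))
    (hl₁ : lam₁ ≠ 1 / 2) (hl₂ : lam₂ ≠ 1 / 2) (hl₃ : lam₃ ≠ 1 / 2) :
    (2 * lam₁ - 1)⁻¹ • c₁ + (2 * lam₂ - 1)⁻¹ • c₂ + (2 * lam₃ - 1)⁻¹ • c₃ = 0 := by
  -- idempotency of c₁, c₂, c₃
  have e₁ : mul c₁ c₁ = c₁ := by
    have : c₁ ∈ {c : A | mul c c = c} := by rw [hidm]; simp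
    exact this
  have e₂ : mul c₂ c₂ = c₂ := by
    have : c₂ ∈ {c : A | mul c c = c} := by rw [hidm]; simp
    exact this
  have e₃ : mul c₃ c₃ = c₃ := by
    have : c₃ ∈ {c : A | mul c c = c} := by rw [hidm]; simp
    exact this
  -- c₁, c₂ linearly independent
  have hli : LinearIndependent ℂ ![c₁, c₂] := by
    rw [LinearIndependent.pair_iff]
    intro s t hst
    by_cases hs : s = 0
    · subst hs
      rw [zero_smul, zero_add] at hst
      have hst' : t • c₂ = 0 := hst
      rcases smul_eq_zero.mp hst' with h | h
      · exact ⟨rfl, h⟩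
      · exact absurd h hc₂
    · exfalso
      have hc1eq : c₁ = (-t/s) • c₂ := by
        have h1 : s • c₁ = (-t) • c₂ := by
          linear_combination (norm := module) hst
        have h2 := congrArg (fun z : A => s⁻¹ • z) h1
        simp only [smul_smul, inv_mul_cancel₀ hs, one_smul] at h2
        rw [div_eq_inv_mul]
        exact h2
      have hsq : mul c₁ c₁ = ((-t/s)*(-t/s)) • c₂ := by
        rw [hc1eq]
        simp only [map_smul, LinearMap.smul_apply, e₂, smul_smul]
      rw [e₁, hc1eq] at hsq
      have : ((-t/s) - (-t/s)*(-t/s)) • c₂ = 0 := by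
        rw [sub_smul, hsq, sub_self]
      rcases smul_eq_zero.mp this with h | h
      · have hu : (-t/s) = 0 ∨ (-t/s) = 1 := by
          have : (-t/s) * (1 - (-t/s)) = 0 := by linear_combination h
          rcases mul_eq_zero.mp this with h' | h'
          · exact Or.inl h'
          · exact Or.inr (by linear_combination -h')
        rcases hu with h' | h'
        · rw [h', zero_smul] at hc1eq; exact hc₁ hc1eq
        · rw [h', one_smul] at hc1eq; exact h12 hc1eq
      · exact hc₂ h
  -- basis
  have hcard : Fintype.card (Fin 2) = Module.finrank ℂ A := by simp [hdim]
  let B : Module.Basis (Fin 2) ℂ A := basisOfLinearIndependentOfCardEqFinrank hli hcard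
  have hB : ⇑B = ![c₁, c₂] := coe_basisOfLinearIndependentOfCardEqFinrank hli hcard
  have hB0 : B 0 = c₁ := by rw [hB]; rfl
  have hB1 : B 1 = c₂ := by rw [hB]; rfl
  have hrepr : ∀ x : A, x = B.repr x 0 • c₁ + B.repr x 1 • c₂ := by
    intro x
    have := B.sum_repr x
    rw [Fin.sum_univ_two, hB0, hB1] at this
    exact this.symm
  -- coefficient extraction
  have key : ∀ α β γ δ : ℂ, α • c₁ + β • c₂ = γ • c₁ + δ • c₂ → α = γ ∧ β = δ := by
    intro α β γ δ h
    obtain ⟨h1, h2⟩ := LinearIndependent.pair_iff.mp hli (α - γ) (β - δ)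
      (by linear_combination (norm := module) h)
    exact ⟨by linear_combination h1, by linear_combination h2⟩
  -- structure constants
  obtain ⟨p, q, hpq⟩ : ∃ p q : ℂ, mul c₁ c₂ = p • c₁ + q • c₂ :=
    ⟨_, _, hrepr (mul c₁ c₂)⟩
  obtain ⟨a, b, hab⟩ : ∃ a b : ℂ, c₃ = a • c₁ + b • c₂ := ⟨_, _, hrepr c₃⟩
  -- idempotency equations for c₃
  have expand : mul c₃ c₃ = (a*a + 2*(a*b)*p) • c₁ + (b*b + 2*(a*b)*q) • c₂ := by
    rw [hab]
    simp only [map_add, map_smul, LinearMap.add_apply, LinearMap.smul_apply,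
      e₁, e₂, hcomm c₂ c₁, hpq]
    module
  obtain ⟨ha', hb'⟩ := key (a*a + 2*(a*b)*p) (b*b + 2*(a*b)*q) a b (by rw [← expand, e₃, hab])
  have ha0 : a ≠ 0 := by
    intro h
    subst h
    have hbb : b * b = b := by linear_combination hb'
    have hb0 : b ≠ 0 := by
      intro h; rw [h] at hab; simp at hab; exact hc₃ hab
    have : b = 1 := by
      have := mul_left_cancel₀ hb0 (by linear_combination hbb : b * b = b * 1)
      exact this
    rw [this] at hab; simp at hab; exact h23 hab.symm
  have hb0 : b ≠ 0 := by
    intro h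
    subst h
    have haa : a * a = a := by linear_combination ha'
    have : a = 1 := mul_left_cancel₀ ha0 (by linear_combination haa : a * a = a * 1)
    rw [this] at hab; simp at hab; exact h13 hab.symm
  have ea : a + 2*b*p = 1 := mul_left_cancel₀ ha0 (by linear_combination ha')
  have eb : b + 2*a*q = 1 := mul_left_cancel₀ hb0 (by linear_combination hb')
  -- helper for charpoly identification
  have charM : ∀ (c : A) (M : Matrix (Fin 2) (Fin 2) ℂ),
      Matrix.toLin B B M = mul c → M.charpoly = LinearMap.charpoly (mul c) := by
    intro c M hM
    rw [← LinearMap.charpoly_toMatrix (mul c) B, ← hM, LinearMap.toMatrix_toLin]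
  -- matrix of L_{c₁}
  have htl₁ : Matrix.toLin B B !![(1:ℂ), p; 0, q] = mul c₁ := by
    apply B.ext
    intro j
    rw [Matrix.toLin_self]
    fin_cases j <;>
      simp [Fin.sum_univ_two, hB0, hB1, e₁, hpq]
  have htl₂ : Matrix.toLin B B !![p, (0:ℂ); q, 1] = mul c₂ := by
    apply B.ext
    intro j
    rw [Matrix.toLin_self]
    fin_cases j <;>
      simp [Fin.sum_univ_two, hB0, hB1, e₂, hcomm c₂ c₁, hpq]
  have htl₃ : Matrix.toLin B B !![a + b*p, a*p; b*q, a*q + b] = mul c₃ := by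
    apply B.ext
    intro j
    rw [Matrix.toLin_self]
    fin_cases j <;>
      · simp [Fin.sum_univ_two, hB0, hB1, hab, map_add, map_smul,
          LinearMap.add_apply, LinearMap.smul_apply, e₁, e₂, hcomm c₂ c₁, hpq]
        module
  -- λ₁ = q
  have h1 : lam₁ = q := by
    have hd := Matrix.det_eq_sign_charpoly_coeff !![(1:ℂ), p; 0, q]
    rw [charM c₁ _ htl₁, hχ₁] at hd
    have hexp : (X - 1) * (X - C lam₁) = X^2 - (C lam₁ + 1) * X + C lam₁ := by ring
    rw [hexp] at hd
    simp [Matrix.det_fin_two_of, coeff_X_pow] at hd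
    linear_combination -hd
  have h2 : lam₂ = p := by
    have hd := Matrix.det_eq_sign_charpoly_coeff !![p, (0:ℂ); q, 1]
    rw [charM c₂ _ htl₂, hχ₂] at hd
    have hexp : (X - 1) * (X - C lam₂) = X^2 - (C lam₂ + 1) * X + C lam₂ := by ring
    rw [hexp] at hd
    simp [Matrix.det_fin_two_of, coeff_X_pow] at hd
    linear_combination -hd
  -- λ₃ from trace
  have h3 : lam₃ + 1 = (a + b*p) + (a*q + b) := by
    have hd := Matrix.trace_eq_neg_charpoly_coeff !![a + b*p, a*p; b*q, a*q + b]
    rw [charM c₃ _ htl₃, hχ₃] at hd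
    have hexp : (X - 1) * (X - C lam₃) = X^2 - (C lam₃ + 1) * X + C lam₃ := by ring
    rw [hexp] at hd
    simp [Matrix.trace_fin_two_of, coeff_X_pow] at hd
    linear_combination -hd
  have hs3 : 2 * lam₃ - 1 = a + b - 1 := by linear_combination 2*h3 + ea + eb
  -- nonvanishing of denominators
  have n1 : 2 * lam₁ - 1 ≠ 0 := fun h => hl₁ (by linear_combination h/2)
  have n2 : 2 * lam₂ - 1 ≠ 0 := fun h => hl₂ (by linear_combination h/2)
  have n3 : 2 * lam₃ - 1 ≠ 0 := fun h => hl₃ (by linear_combination h/2)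
  have n3' : a + b - 1 ≠ 0 := by rw [← hs3]; exact n3
  -- the two scalar identities
  have hα : (2 * lam₁ - 1)⁻¹ + (2 * lam₃ - 1)⁻¹ * a = 0 := by
    rw [h1, hs3]
    have nq : 2 * q - 1 ≠ 0 := by rw [← h1]; exact n1
    field_simp
    linear_combination eb
  have hβ : (2 * lam₂ - 1)⁻¹ + (2 * lam₃ - 1)⁻¹ * b = 0 := by
    rw [h2, hs3]
    have np : 2 * p - 1 ≠ 0 := by rw [← h2]; exact n2
    field_simp
    linear_combination ea
  calc (2 * lam₁ - 1)⁻¹ • c₁ + (2 * lam₂ - 1)⁻¹ • c₂ + (2 * lam₃ - 1)⁻¹ • c₃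
      = ((2 * lam₁ - 1)⁻¹ + (2 * lam₃ - 1)⁻¹ * a) • c₁
        + ((2 * lam₂ - 1)⁻¹ + (2 * lam₃ - 1)⁻¹ * b) • c₂ := by
        rw [hab]; module
    _ = 0 := by rw [hα, hβ]; simp
end

section
/- Let K be a field of characteristic zero and let λ_1, λ_2, λ_3 ∈ K satisfy 4 λ_1 λ_2 λ_3 − λ_1 − λ_2 − λ_3 + 1 = 0 and λ_i ≠ 1/2 for i = 1, 2, 3. Then there exists a commutative bilinear multiplication on the vector space K² and three pairwise distinct nonzero idempotents c_1, c_2, c_3 of the resulting algebra such that for each i the characteristic polynomial of the multiplication operator L_{c_i} is (t − 1)(t − λ_i) (i.e. the Peirce spectrum of c_i is {1, λ_i}). -/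
open Polynomial

lemma charpoly_fin_two_eq {K : Type*} [Field K] (M : Matrix (Fin 2) (Fin 2) K) (lam : K)
    (htr : M 0 0 + M 1 1 = 1 + lam)
    (hdet : M 0 0 * M 1 1 - M 0 1 * M 1 0 = lam) :
    M.charpoly = (X - 1) * (X - C lam) := by
  have h1 : (C (M 0 0) + C (M 1 1) : K[X]) = 1 + C lam := by
    simpa only [C_add, C_1] using congrArg C htr
  have h2 : (C (M 0 0) * C (M 1 1) - C (M 0 1) * C (M 1 0) : K[X]) = C lam := by
    simpa only [C_mul, C_sub] using congrArg C hdet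
  rw [Matrix.charpoly, Matrix.det_fin_two, Matrix.charmatrix_apply_eq,
    Matrix.charmatrix_apply_eq, Matrix.charmatrix_apply_ne _ _ _ (by decide),
    Matrix.charmatrix_apply_ne _ _ _ (by decide)]
  linear_combination (-X : K[X]) * h1 + h2

lemma charpoly_of_entries {K : Type*} [Field K] (g : (Fin 2 → K) →ₗ[K] (Fin 2 → K)) (lam : K)
    (htr : g ![1,0] 0 + g ![0,1] 1 = 1 + lam)
    (hdet : g ![1,0] 0 * g ![0,1] 1 - g ![0,1] 0 * g ![1,0] 1 = lam) :
    LinearMap.charpoly g = (X - 1) * (X - C lam) := by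
  rw [← LinearMap.charpoly_toMatrix g (Pi.basisFun K (Fin 2)), LinearMap.toMatrix_eq_toMatrix']
  have e0 : (fun j' => if j' = (0 : Fin 2) then (1:K) else 0) = ![1,0] := by
    funext j; fin_cases j <;> simp
  have e1 : (fun j' => if j' = (1 : Fin 2) then (1:K) else 0) = ![0,1] := by
    funext j; fin_cases j <;> simp
  have e0' : (Pi.single (0 : Fin 2) (1:K) : Fin 2 → K) = ![1,0] := by
    funext j; fin_cases j <;> simp
  have e1' : (Pi.single (1 : Fin 2) (1:K) : Fin 2 → K) = ![0,1] := by
    funext j; fin_cases j <;> simp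
  apply charpoly_fin_two_eq
  · simpa [LinearMap.toMatrix'_apply, e0, e1, e0', e1'] using htr
  · simpa [LinearMap.toMatrix'_apply, e0, e1, e0', e1'] using hdet

/-- The commutative multiplication on `K²` with `e₁e₁ = e₁`, `e₂e₂ = e₂`,
`e₁e₂ = μ e₁ + lam e₂`. -/
def mulAux {K : Type*} [Field K] (lam mu : K) :
    (Fin 2 → K) →ₗ[K] (Fin 2 → K) →ₗ[K] (Fin 2 → K) :=
  LinearMap.mk₂ K
    (fun u v => ![u 0 * v 0 + mu * (u 0 * v 1 + u 1 * v 0),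
                  u 1 * v 1 + lam * (u 0 * v 1 + u 1 * v 0)])
    (by intro m₁ m₂ n; funext i; fin_cases i <;> simp <;> ring)
    (by intro a m n; funext i; fin_cases i <;> simp <;> ring)
    (by intro m n₁ n₂; funext i; fin_cases i <;> simp <;> ring)
    (by intro a m n; funext i; fin_cases i <;> simp <;> ring)

@[simp] lemma mulAux_apply {K : Type*} [Field K] (lam mu : K) (u v : Fin 2 → K) :
    mulAux lam mu u v = ![u 0 * v 0 + mu * (u 0 * v 1 + u 1 * v 0),
                          u 1 * v 1 + lam * (u 0 * v 1 + u 1 * v 0)] := rfl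

/-- Theorem 4.1 (converse direction). Given `λ₁, λ₂, λ₃` in a field `K` of
characteristic zero satisfying the syzygy `4 λ₁ λ₂ λ₃ - λ₁ - λ₂ - λ₃ + 1 = 0` and
`λᵢ ≠ 1/2`, there is a commutative bilinear multiplication on `K²` together with
three pairwise distinct nonzero idempotents `c₁, c₂, c₃` such that the characteristic
polynomial of `L_{cᵢ}` is `(t - 1)(t - λᵢ)` for each `i`. -/
theorem exists_algebra_with_prescribed_spectrum
    {K : Type*} [Field K] [CharZero K]
    (lam₁ lam₂ lam₃ : K)
    (hsyz : 4 * lam₁ * lam₂ * lam₃ - lam₁ - lam₂ - lam₃ + 1 = 0)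
    (hl₁ : lam₁ ≠ 1 / 2) (hl₂ : lam₂ ≠ 1 / 2) (hl₃ : lam₃ ≠ 1 / 2) :
    ∃ mul : (Fin 2 → K) →ₗ[K] (Fin 2 → K) →ₗ[K] (Fin 2 → K),
      (∀ x y, mul x y = mul y x) ∧
      ∃ c₁ c₂ c₃ : Fin 2 → K,
        c₁ ≠ 0 ∧ c₂ ≠ 0 ∧ c₃ ≠ 0 ∧ c₁ ≠ c₂ ∧ c₁ ≠ c₃ ∧ c₂ ≠ c₃ ∧
        mul c₁ c₁ = c₁ ∧ mul c₂ c₂ = c₂ ∧ mul c₃ c₃ = c₃ ∧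
        LinearMap.charpoly (mul c₁) = (X - 1) * (X - C lam₁) ∧
        LinearMap.charpoly (mul c₂) = (X - 1) * (X - C lam₂) ∧
        LinearMap.charpoly (mul c₃) = (X - 1) * (X - C lam₃) := by
  have hn₁ : (1 : K) - 2 * lam₁ ≠ 0 := by
    intro h; apply hl₁; field_simp; linear_combination -h
  have hn₂ : (1 : K) - 2 * lam₂ ≠ 0 := by
    intro h; apply hl₂; field_simp; linear_combination -h
  have hD : (1 : K) - 4 * lam₁ * lam₂ ≠ 0 := by
    intro h
    apply hl₁
    have hsq : (2 * lam₁ - 1) ^ 2 = 0 := by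
      linear_combination (-4 * lam₁) * hsyz + (1 - 4 * lam₁ * lam₃) * h
    have h0 : 2 * lam₁ - 1 = 0 := pow_eq_zero_iff (n := 2) (by norm_num) |>.mp hsq
    field_simp
    linear_combination h0
  have hx : (1 - 2 * lam₂) / (1 - 4 * lam₁ * lam₂) ≠ 0 := div_ne_zero hn₂ hD
  have hy : (1 - 2 * lam₁) / (1 - 4 * lam₁ * lam₂) ≠ 0 := div_ne_zero hn₁ hD
  refine ⟨mulAux lam₁ lam₂, ?_, ![1,0], ![0,1],
    ![(1 - 2 * lam₂) / (1 - 4 * lam₁ * lam₂), (1 - 2 * lam₁) / (1 - 4 * lam₁ * lam₂)],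
    ?_, ?_, ?_, ?_, ?_, ?_, ?_, ?_, ?_, ?_, ?_, ?_⟩
  · intro u v; funext i; fin_cases i <;> simp <;> ring
  · intro h; simpa using congrFun h 0
  · intro h; simpa using congrFun h 1
  · intro h; exact hx (by simpa using congrFun h 0)
  · intro h; simpa using congrFun h 0
  · intro h; exact hy (by simpa using (congrFun h 1).symm)
  · intro h; exact hx (by simpa using (congrFun h 0).symm)
  · funext i; fin_cases i <;> simp
  · funext i; fin_cases i <;> simp
  · funext i; fin_cases i <;> simp
    · have hD' : (1 : K) - lam₂ * 4 * lam₁ ≠ 0 := by contrapose! hD; linear_combination hD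
      field_simp
      ring
    · have hD' : (1 : K) - lam₁ * 4 * lam₂ ≠ 0 := by contrapose! hD; linear_combination hD
      field_simp
      ring
  · apply charpoly_of_entries <;> simp <;> ring
  · apply charpoly_of_entries <;> simp <;> ring
  · apply charpoly_of_entries
    · simp only [mulAux_apply, Matrix.cons_val_zero, Matrix.cons_val_one, Matrix.head_cons]
      have hD' : (1 : K) - lam₂ * 4 * lam₁ ≠ 0 := by contrapose! hD; linear_combination hD
      field_simp
      linear_combination hsyz
    · simp only [mulAux_apply, Matrix.cons_val_zero, Matrix.cons_val_one, Matrix.head_cons]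
      have hD' : (1 : K) - lam₂ * 4 * lam₁ ≠ 0 := by contrapose! hD; linear_combination hD
      field_simp
      linear_combination (1 - 4 * lam₁ * lam₂) * hsyz
end

section
/- Let A be the commutative algebra on ℝ³ whose squaring map is x² = (x_1² − x_2 x_3, x_2² − x_1 x_3, x_3² − x_1 x_2), i.e. with multiplication x∘y = (x_1y_1 − (x_2y_3 + x_3y_2)/2, x_2y_2 − (x_1y_3 + x_3y_1)/2, x_3y_3 − (x_1y_2 + x_2y_1)/2). Then a nonzero element x ∈ ℝ³ satisfies x∘x = x if and only if x_1 + x_2 + x_3 = 1 and (x_1 − 1/3)² + (x_2 − 1/3)² + (x_3 − 1/3)² = 2/3; that is, the set of nonzero idempotents of A is a circle. -/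
/-- Example 3.6: idempotents. For the commutative algebra on `ℝ³` with squaring map
`x² = (x₁² - x₂x₃, x₂² - x₁x₃, x₃² - x₁x₂)` (multiplication obtained by
polarization), a nonzero `x` is an idempotent iff `x₁ + x₂ + x₃ = 1` and
`(x₁ - 1/3)² + (x₂ - 1/3)² + (x₃ - 1/3)² = 2/3`: the nonzero idempotents form a
circle. -/
theorem idempotents_of_circle_algebra
    (mul : (Fin 3 → ℝ) → (Fin 3 → ℝ) → (Fin 3 → ℝ))
    (hmul : ∀ x y, mul x y =
      ![x 0 * y 0 - (x 1 * y 2 + x 2 * y 1) / 2,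
        x 1 * y 1 - (x 0 * y 2 + x 2 * y 0) / 2,
        x 2 * y 2 - (x 0 * y 1 + x 1 * y 0) / 2]) :
    ∀ x : Fin 3 → ℝ, x ≠ 0 →
      (mul x x = x ↔
        x 0 + x 1 + x 2 = 1 ∧
        (x 0 - 1 / 3) ^ 2 + (x 1 - 1 / 3) ^ 2 + (x 2 - 1 / 3) ^ 2 = 2 / 3) := by
  intro x hx
  set a := x 0 with ha
  set b := x 1 with hb
  set c := x 2 with hc
  have hxne : ¬ (a = 0 ∧ b = 0 ∧ c = 0) := by
    rintro ⟨h0, h1, h2⟩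
    apply hx
    funext i
    fin_cases i <;> simp_all
  have hiff : mul x x = x ↔
      (a * a - (b * c + c * b) / 2 = a ∧
       b * b - (a * c + c * a) / 2 = b ∧
       c * c - (a * b + b * a) / 2 = c) := by
    rw [hmul]
    constructor
    · intro h
      refine ⟨?_, ?_, ?_⟩
      · have := congrFun h 0; simpa using this
      · have := congrFun h 1; simpa using this
      · have := congrFun h 2; simpa using this
    · rintro ⟨h0, h1, h2⟩
      funext i
      fin_cases i <;> simp_all
  rw [hiff]
  constructor
  · rintro ⟨h0, h1, h2⟩
    by_cases hs : a + b + c = 1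
    · refine ⟨hs, by nlinarith [h0, h1, h2]⟩
    · exfalso
      have hab : a = b := by
        have : (a - b) * (a + b + c - 1) = 0 := by nlinarith [h0, h1]
        rcases mul_eq_zero.mp this with h | h
        · linarith
        · exact absurd (by linarith) hs
      have hbc : b = c := by
        have : (b - c) * (a + b + c - 1) = 0 := by nlinarith [h1, h2]
        rcases mul_eq_zero.mp this with h | h
        · linarith
        · exact absurd (by linarith) hs
      have ha0 : a = 0 := by nlinarith [h0]
      exact hxne ⟨ha0, by linarith, by linarith⟩
  · rintro ⟨hs, hcirc⟩
    have hP : a * b + b * c + c * a = 0 := by nlinarith [hs, hcirc, sq_nonneg (a + b + c)]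
    exact ⟨by linear_combination a * hs - hP, by linear_combination b * hs - hP,
      by linear_combination c * hs - hP⟩
end

section
/- Let A be the commutative algebra on ℝ³ with multiplication x∘y = (x_1y_1 − (x_2y_3 + x_3y_2)/2, x_2y_2 − (x_1y_3 + x_3y_1)/2, x_3y_3 − (x_1y_2 + x_2y_1)/2). Then for every nonzero idempotent c of A, the characteristic polynomial of the multiplication operator L_c is (t − 1)(t − 1/2)(t + 1/2); in particular, the Peirce spectrum of every nonzero idempotent is {1, 1/2, −1/2}. -/
open Polynomial

/-- Example 3.6: Peirce spectrum. For the commutative algebra on `ℝ³` with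
multiplication `x∘y = (x₁y₁ - (x₂y₃ + x₃y₂)/2, x₂y₂ - (x₁y₃ + x₃y₁)/2,
x₃y₃ - (x₁y₂ + x₂y₁)/2)`, the characteristic polynomial of the multiplication
operator `L_c` of every nonzero idempotent `c` is `(t - 1)(t - 1/2)(t + 1/2)`;
so the Peirce spectrum of every nonzero idempotent is `{1, 1/2, -1/2}`. -/
theorem peirce_spectrum_of_circle_algebra
    (mul : (Fin 3 → ℝ) →ₗ[ℝ] (Fin 3 → ℝ) →ₗ[ℝ] (Fin 3 → ℝ))
    (hmul : ∀ x y, mul x y =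
      ![x 0 * y 0 - (x 1 * y 2 + x 2 * y 1) / 2,
        x 1 * y 1 - (x 0 * y 2 + x 2 * y 0) / 2,
        x 2 * y 2 - (x 0 * y 1 + x 1 * y 0) / 2]) :
    ∀ c : Fin 3 → ℝ, c ≠ 0 → mul c c = c →
      LinearMap.charpoly (mul c)
        = (X - 1) * (X - C (1 / 2 : ℝ)) * (X + C (1 / 2 : ℝ)) := by
  intro c hc hidem
  set a := c 0 with ha'
  set b := c 1 with hb'
  set d := c 2 with hd'
  -- the idempotency equations, componentwise
  have h0 : a = a^2 - b*d := by
    have := congrFun (hidem.symm.trans (hmul c c)) 0; simp at this; linarith [this]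
  have h1 : b = b^2 - a*d := by
    have := congrFun (hidem.symm.trans (hmul c c)) 1; simp at this; linarith [this]
  have h2 : d = d^2 - a*b := by
    have := congrFun (hidem.symm.trans (hmul c c)) 2; simp at this; linarith [this]
  -- the second elementary symmetric function vanishes
  have he : a*b + b*d + a*d = 0 := by
    linear_combination ((b+d)/2)*h0 + ((a+d)/2)*h1 + ((a+b)/2)*h2
  -- the trace is 1 (using c ≠ 0)
  have hs : a + b + d = 1 := by
    have hne : ¬ (a = 0 ∧ b = 0 ∧ d = 0) := by
      rintro ⟨ea, eb, ed⟩
      apply hc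
      funext i
      fin_cases i <;> simpa [ha', hb', hd'] using (by assumption : _ = (0:ℝ))
    have hss : (a+b+d) = (a+b+d)^2 := by linear_combination h0+h1+h2-3*he
    rcases mul_eq_zero.1 (show (a+b+d)*((a+b+d)-1) = 0 by ring_nf; linarith) with h | h
    · exfalso
      have hp2 : a^2+b^2+d^2 = 0 := by nlinarith [he, h]
      exact hne ⟨by nlinarith [sq_nonneg a, sq_nonneg b, sq_nonneg d],
        by nlinarith [sq_nonneg a, sq_nonneg b, sq_nonneg d],
        by nlinarith [sq_nonneg a, sq_nonneg b, sq_nonneg d]⟩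
    · linarith
  -- the matrix of L_c in the standard basis
  have hM : LinearMap.toMatrix' (mul c)
      = !![a, -d/2, -b/2; -d/2, b, -a/2; -b/2, -a/2, d] := by
    ext i j
    rw [LinearMap.toMatrix'_apply, hmul]
    fin_cases i <;> fin_cases j <;> simp [ha', hb', hd'] <;> ring
  have hcp : LinearMap.charpoly (mul c)
      = (!![a, -d/2, -b/2; -d/2, b, -a/2; -b/2, -a/2, d] :
          Matrix (Fin 3) (Fin 3) ℝ).charpoly := by
    rw [← LinearMap.charpoly_toMatrix (mul c) (Pi.basisFun ℝ (Fin 3)),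
      LinearMap.toMatrix_eq_toMatrix', hM]
  rw [hcp, Matrix.charpoly, Matrix.det_fin_three]
  apply Polynomial.funext
  intro x
  simp [Matrix.charmatrix_apply_eq, Matrix.charmatrix_apply_ne]
  linear_combination (-x^2 - ((a+b+d)+1)*x/4 + ((a+b+d)^2+(a+b+d)+1)/4) * hs
    + (3/2*x - 3/4*(a+b+d)) * he
end

section
/- Let A be the commutative algebra on ℝ³ with multiplication x∘y = (x_1y_1 − (x_2y_3 + x_3y_2)/2, x_2y_2 − (x_1y_3 + x_3y_1)/2, x_3y_3 − (x_1y_2 + x_2y_1)/2). Then an element x ∈ ℝ³ satisfies x∘x = 0 if and only if x_1 = x_2 = x_3; that is, the set of 2-nilpotents of A is the line ℝ·(1,1,1). -/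
/-- Example 3.6: 2-nilpotents. For the commutative algebra on `ℝ³` with
multiplication `x∘y = (x₁y₁ - (x₂y₃ + x₃y₂)/2, x₂y₂ - (x₁y₃ + x₃y₁)/2,
x₃y₃ - (x₁y₂ + x₂y₁)/2)`, an element `x` satisfies `x∘x = 0` iff
`x₁ = x₂ = x₃`: the 2-nilpotents form the line `ℝ·(1,1,1)`. -/
theorem nilpotents_of_circle_algebra
    (mul : (Fin 3 → ℝ) → (Fin 3 → ℝ) → (Fin 3 → ℝ))
    (hmul : ∀ x y, mul x y =
      ![x 0 * y 0 - (x 1 * y 2 + x 2 * y 1) / 2,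
        x 1 * y 1 - (x 0 * y 2 + x 2 * y 0) / 2,
        x 2 * y 2 - (x 0 * y 1 + x 1 * y 0) / 2]) :
    ∀ x : Fin 3 → ℝ, (mul x x = 0 ↔ x 0 = x 1 ∧ x 1 = x 2) := by
  intro x
  rw [hmul]
  constructor
  · intro h
    have h0 := congrFun h 0
    have h1 := congrFun h 1
    have h2 := congrFun h 2
    simp [Matrix.cons_val_zero, Matrix.cons_val_one] at h0 h1 h2
    constructor <;> nlinarith [sq_nonneg (x 0 - x 1), sq_nonneg (x 1 - x 2), sq_nonneg (x 0 - x 2)]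
  · rintro ⟨h01, h12⟩
    funext i
    fin_cases i <;> simp [h01, h12] <;> ring
end
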